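/- Let (M,F,g) be a foliated Riemannian manifold, f a smooth positive basic function, and let A^f denote the integrability tensor of F^⊥ with respect to the warped metric g_f, and S^f its second fundamental form with respect to g_f. Then for X, Y orthogonal to F: S^f(X,Y) = (1/f²) S(X,Y) (as F-valued tensors measured against g_f), and in particular F is Riemannian with respect to g if and only if it is Riemannian with respect to g_f. -/
import Mathlib


open scoped RealInnerProductSpace

/-- Abstract model of the smooth vector-field calculus of a foliated Riemannian
manifold `(M, 𝓕, g)`.  Here `C` plays the role of the algebra of smooth
functions on `M` and `V` that of the `C`-module of smooth vector fields.
`F` is the submodule of sections tangent to the foliation, `Fp` the submodule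
of sections orthogonal to it, `pt`/`pp` the corresponding projections,
`g` the Riemannian metric, `lie` the Lie bracket, `act` the action of a vector
field on a function (directional derivative) and `nabla` the Levi-Civita
connection of `g`. -/
structure FoliatedRiemann (C : Type*) (V : Type*) [CommRing C] [Algebra ℝ C]
    [AddCommGroup V] [Module C V] where
  g : V → V → C
  lie : V → V → V
  act : V → C → C
  nabla : V → V → V
  F : Submodule C V
  Fp : Submodule C V
  pt : V → V
  pp : V → V
  g_symm : ∀ v w, g v w = g w v
  g_addl : ∀ u v w, g (u + v) w = g u w + g v w
  g_smull : ∀ (c : C) (v w : V), g (c • v) w = c * g v w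
  g_nondeg : ∀ v, (∀ w, g v w = 0) → v = 0
  pt_mem : ∀ v, pt v ∈ F
  pp_mem : ∀ v, pp v ∈ Fp
  decomp : ∀ v, pt v + pp v = v
  pt_of_mem : ∀ v ∈ F, pt v = v
  pp_of_mem : ∀ v ∈ Fp, pp v = v
  orth : ∀ u x, u ∈ F → x ∈ Fp → g u x = 0
  full_orth : ∀ v, (∀ u ∈ F, g v u = 0) → v ∈ Fp
  torsion_free : ∀ v w, nabla v w - nabla w v = lie v w
  compat : ∀ e v w, act e (g v w) = g (nabla e v) w + g v (nabla e w)
  nabla_addl : ∀ u v w, nabla (u + v) w = nabla u w + nabla v w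
  nabla_smull : ∀ (c : C) (v w : V), nabla (c • v) w = c • nabla v w
  nabla_addr : ∀ u v w, nabla u (v + w) = nabla u v + nabla u w
  nabla_leibniz : ∀ (u : V) (c : C) (v : V), nabla u (c • v) = act u c • v + c • nabla u v
  act_add : ∀ (v : V) (a b : C), act v (a + b) = act v a + act v b
  act_mul : ∀ (v : V) (a b : C), act v (a * b) = act v a * b + a * act v b
  act_const : ∀ (v : V) (r : ℝ), act v (algebraMap ℝ C r) = 0

namespace FoliatedRiemann

variable {C V : Type*} [CommRing C] [Algebra ℝ C] [AddCommGroup V] [Module C V]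
variable (M : FoliatedRiemann C V)

/-- A basic function: constant along the leaves of the foliation. -/
def Basic (f : C) : Prop := ∀ u ∈ M.F, M.act u f = 0

/-- The warped metric `g_f`: equal to `f² g` on tangent components and to `g`
on orthogonal components. -/
def gf (f : C) (v w : V) : C := f ^ 2 * M.g (M.pt v) (M.pt w) + M.g (M.pp v) (M.pp w)

/-- The curvature tensor of a connection `n`. -/
def Rc (n : V → V → V) (x y z : V) : V := n x (n y z) - n y (n x z) - n (M.lie x y) z

/-- Lie derivative of a metric `h` in the direction `u`, evaluated on `x, y`. -/
def lieDer (h : V → V → C) (u x y : V) : C :=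
  M.act u (h x y) - h (M.lie u x) y - h x (M.lie u y)

/-- `n` is the Levi-Civita connection of the metric `h`: it is torsion free and
metric-compatible (which determines it uniquely, by the Koszul formula). -/
def IsLeviCivita (n : V → V → V) (h : V → V → C) : Prop :=
  (∀ v w, n v w - n w v = M.lie v w) ∧
  (∀ e v w, M.act e (h v w) = h (n e v) w + h v (n e w))

end FoliatedRiemann

namespace FoliatedRiemann

variable {C V : Type*} [CommRing C] [Algebra ℝ C] [AddCommGroup V] [Module C V]
variable (M : FoliatedRiemann C V)

lemma g_zerol (w : V) : M.g 0 w = 0 := by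
  have := M.g_smull 0 0 w; simpa using this

lemma g_negl (v w : V) : M.g (-v) w = - M.g v w := by
  have := M.g_smull (-1) v w; simpa using this

lemma g_subl (u v w : V) : M.g (u - v) w = M.g u w - M.g v w := by
  rw [sub_eq_add_neg, M.g_addl, M.g_negl, sub_eq_add_neg]

lemma g_addr (u v w : V) : M.g u (v + w) = M.g u v + M.g u w := by
  rw [M.g_symm, M.g_addl, M.g_symm v u, M.g_symm w u]

lemma g_subr (u v w : V) : M.g u (v - w) = M.g u v - M.g u w := by
  rw [M.g_symm, M.g_subl, M.g_symm v u, M.g_symm w u]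

lemma g_zeror (v : V) : M.g v 0 = 0 := by
  rw [M.g_symm]; exact M.g_zerol v

lemma act_zero (v : V) : M.act v 0 = 0 := by
  have := M.act_const v 0; simpa using this

lemma inter_zero {v : V} (h1 : v ∈ M.F) (h2 : v ∈ M.Fp) : v = 0 := by
  apply M.g_nondeg
  intro w
  calc M.g v w = M.g v (M.pt w + M.pp w) := by rw [M.decomp]
  _ = M.g v (M.pt w) + M.g v (M.pp w) := M.g_addr _ _ _
  _ = 0 := by
      rw [M.g_symm v (M.pt w), M.orth _ _ (M.pt_mem w) h2,
        M.orth _ _ h1 (M.pp_mem w), add_zero]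

lemma decomp_unique {v a b : V} (ha : a ∈ M.F) (hb : b ∈ M.Fp) (h : a + b = v) :
    M.pt v = a ∧ M.pp v = b := by
  have hd : M.pt v + M.pp v = a + b := by rw [M.decomp v, h]
  have h1 : M.pt v - a = b - M.pp v := by
    rw [sub_eq_sub_iff_add_eq_add, hd, add_comm]
  have hmem1 : M.pt v - a ∈ M.F := sub_mem (M.pt_mem v) ha
  have hmem2 : M.pt v - a ∈ M.Fp := h1 ▸ sub_mem hb (M.pp_mem v)
  have hz : M.pt v = a := sub_eq_zero.mp (M.inter_zero hmem1 hmem2)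
  refine ⟨hz, ?_⟩
  have := hd
  rw [hz] at this
  exact add_left_cancel this

lemma pt_of_mem_Fp {v : V} (hv : v ∈ M.Fp) : M.pt v = 0 :=
  (M.decomp_unique (zero_mem _) hv (zero_add v)).1

lemma pp_of_mem_F {v : V} (hv : v ∈ M.F) : M.pp v = 0 :=
  (M.decomp_unique hv (zero_mem _) (add_zero v)).2

lemma pt_pp_sub (v w : V) :
    M.pt (v - w) = M.pt v - M.pt w ∧ M.pp (v - w) = M.pp v - M.pp w :=
  M.decomp_unique (sub_mem (M.pt_mem v) (M.pt_mem w))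
    (sub_mem (M.pp_mem v) (M.pp_mem w))
    (by conv_rhs => rw [← M.decomp v, ← M.decomp w]
        abel)

lemma gf_symm (f : C) (v w : V) : M.gf f v w = M.gf f w v := by
  simp only [gf, M.g_symm (M.pt v), M.g_symm (M.pp v)]

lemma gf_subr (f : C) (u v w : V) : M.gf f u (v - w) = M.gf f u v - M.gf f u w := by
  simp only [gf, (M.pt_pp_sub v w).1, (M.pt_pp_sub v w).2, M.g_subr]
  ring

/-- For `u ∈ F`, `g_f(v,u) = f² g(v,u)`. -/
lemma gf_left_F (f : C) {u : V} (hu : u ∈ M.F) (v : V) :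
    M.gf f v u = f ^ 2 * M.g v u := by
  have h1 : M.pt u = u := M.pt_of_mem u hu
  have h2 : M.pp u = 0 := M.pp_of_mem_F hu
  have h3 : M.g (M.pt v) u = M.g v u := by
    have := M.g_addl (M.pt v) (M.pp v) u
    rw [M.decomp v] at this
    rw [M.g_symm (M.pp v) u, M.orth u _ hu (M.pp_mem v), add_zero] at this
    exact this.symm
  simp only [gf, h1, h2, M.g_zeror, add_zero, h3]

/-- For `y ∈ F^⊥`, `g_f(y,w) = g(y,w)`. -/
lemma gf_left_Fp (f : C) {y : V} (hy : y ∈ M.Fp) (w : V) :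
    M.gf f y w = M.g y w := by
  have h1 : M.pt y = 0 := M.pt_of_mem_Fp hy
  have h2 : M.pp y = y := M.pp_of_mem y hy
  have h3 : M.g y (M.pp w) = M.g y w := by
    have := M.g_addr y (M.pt w) (M.pp w)
    rw [M.decomp w] at this
    rw [M.g_symm y (M.pt w), M.orth _ _ (M.pt_mem w) hy, zero_add] at this
    exact this.symm
  simp only [gf, h1, h2, M.g_zerol, mul_zero, zero_add, h3]

/-- Symmetrized Koszul identity for a torsion-free metric connection. -/
lemma koszul_symm (h : V → V → C) (n : V → V → V)
    (hsym : ∀ v w, h v w = h w v)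
    (hsubr : ∀ u v w, h u (v - w) = h u v - h u w)
    (htf : ∀ v w, n v w - n w v = M.lie v w)
    (hcompat : ∀ e v w, M.act e (h v w) = h (n e v) w + h v (n e w))
    (x y z : V) :
    h (n x y) z + h (n y x) z =
      M.act x (h y z) + M.act y (h x z) - M.act z (h x y)
        - h y (M.lie x z) - h x (M.lie y z) := by
  have E1 := hcompat x y z
  have E2 := hcompat y x z
  have E3' : M.act z (h x y) = h y (n z x) + h x (n z y) := by
    rw [hcompat z x y, hsym (n z x) y]
  have L1 : h y (M.lie x z) = h y (n x z) - h y (n z x) := by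
    rw [← htf x z, hsubr]
  have L2 : h x (M.lie y z) = h x (n y z) - h x (n z y) := by
    rw [← htf y z, hsubr]
  rw [E1, E2, E3', L1, L2]
  ring

end FoliatedRiemann

/-- the second fundamental form of `F^⊥` with respect to the
warped metric satisfies `S^f(X,Y) = (1/f²) S(X,Y)`; in particular `F` is
Riemannian with respect to `g` iff it is Riemannian with respect to `g_f`. -/
theorem warped_second_fundamental_form_of_orthogonal_distribution
    {C V : Type*} [CommRing C] [PartialOrder C] [Algebra ℝ C]
    [AddCommGroup V] [Module C V]
    (M : FoliatedRiemann C V) (f finv : C) (hfpos : 0 < f) (hfinv : f * finv = 1)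
    (hbasic : M.Basic f)
    (nf S Sf : V → V → V)
    (hnf : M.IsLeviCivita nf (M.gf f))
    (hSval : ∀ x y, x ∈ M.Fp → y ∈ M.Fp → S x y ∈ M.F)
    (hSdef : ∀ x y, x ∈ M.Fp → y ∈ M.Fp → ∀ u ∈ M.F,
      M.g (S x y) u = (1/2 : ℝ) • (M.g (M.nabla x y) u + M.g (M.nabla y x) u))
    (hSfval : ∀ x y, x ∈ M.Fp → y ∈ M.Fp → Sf x y ∈ M.F)
    (hSfdef : ∀ x y, x ∈ M.Fp → y ∈ M.Fp → ∀ u ∈ M.F,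
      M.gf f (Sf x y) u = (1/2 : ℝ) • (M.gf f (nf x y) u + M.gf f (nf y x) u)) :
    (∀ x y, x ∈ M.Fp → y ∈ M.Fp → Sf x y = finv ^ 2 • S x y) ∧
    ((∀ u ∈ M.F, ∀ x ∈ M.Fp, ∀ y ∈ M.Fp, M.lieDer M.g u x y = 0) ↔
     (∀ u ∈ M.F, ∀ x ∈ M.Fp, ∀ y ∈ M.Fp, M.lieDer (M.gf f) u x y = 0)) := by
  obtain ⟨htf, hcompat⟩ := hnf
  have hone : finv ^ 2 * f ^ 2 = 1 := by
    calc finv ^ 2 * f ^ 2 = (f * finv) ^ 2 := by ring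
    _ = 1 := by rw [hfinv, one_pow]
  have key : ∀ x y, x ∈ M.Fp → y ∈ M.Fp → ∀ u ∈ M.F,
      f ^ 2 * M.g (Sf x y) u = M.g (S x y) u := by
    intro x y hx hy u hu
    have gyu : M.g y u = 0 := by rw [M.g_symm]; exact M.orth u y hu hy
    have gxu : M.g x u = 0 := by rw [M.g_symm]; exact M.orth u x hu hx
    have K := M.koszul_symm (M.gf f) nf (M.gf_symm f) (M.gf_subr f) htf hcompat x y u
    have K' := M.koszul_symm M.g M.nabla M.g_symm M.g_subr M.torsion_free M.compat x y u
    rw [M.gf_left_F f hu (nf x y), M.gf_left_F f hu (nf y x),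
        M.gf_left_F f hu y, M.gf_left_F f hu x, gyu, gxu, mul_zero,
        M.act_zero, M.act_zero, M.gf_left_Fp f hx y,
        M.gf_left_Fp f hy (M.lie x u), M.gf_left_Fp f hx (M.lie y u)] at K
    rw [gyu, gxu, M.act_zero, M.act_zero] at K'
    have hstar : f ^ 2 * M.g (nf x y) u + f ^ 2 * M.g (nf y x) u
        = M.g (M.nabla x y) u + M.g (M.nabla y x) u := by rw [K, K']
    have h1 := hSfdef x y hx hy u hu
    rw [M.gf_left_F f hu (Sf x y), M.gf_left_F f hu (nf x y),
        M.gf_left_F f hu (nf y x)] at h1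
    rw [hSdef x y hx hy u hu, h1, hstar]
  constructor
  · intro x y hx hy
    have hmem : Sf x y - finv ^ 2 • S x y ∈ M.F :=
      sub_mem (hSfval x y hx hy) (Submodule.smul_mem _ _ (hSval x y hx hy))
    have hz : Sf x y - finv ^ 2 • S x y = 0 := by
      apply M.g_nondeg
      intro w
      have hw1 : M.g (Sf x y - finv ^ 2 • S x y) (M.pt w) = 0 := by
        rw [M.g_subl, M.g_smull]
        have hk := key x y hx hy (M.pt w) (M.pt_mem w)
        have hq : M.g (Sf x y) (M.pt w) = finv ^ 2 * M.g (S x y) (M.pt w) := by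
          rw [← hk]
          linear_combination (-(M.g (Sf x y) (M.pt w))) * hone
        rw [hq]; ring
      have hw2 : M.g (Sf x y - finv ^ 2 • S x y) (M.pp w) = 0 :=
        M.orth _ _ hmem (M.pp_mem w)
      calc M.g (Sf x y - finv ^ 2 • S x y) w
          = M.g (Sf x y - finv ^ 2 • S x y) (M.pt w + M.pp w) := by rw [M.decomp]
      _ = M.g (Sf x y - finv ^ 2 • S x y) (M.pt w)
            + M.g (Sf x y - finv ^ 2 • S x y) (M.pp w) := M.g_addr _ _ _
      _ = 0 := by rw [hw1, hw2, add_zero]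
    exact sub_eq_zero.mp hz
  · have heq : ∀ u x y, x ∈ M.Fp → y ∈ M.Fp →
        M.lieDer (M.gf f) u x y = M.lieDer M.g u x y := by
      intro u x y hx hy
      simp only [FoliatedRiemann.lieDer]
      rw [M.gf_left_Fp f hx y, M.gf_symm f (M.lie u x) y,
          M.gf_left_Fp f hy (M.lie u x), M.g_symm y (M.lie u x),
          M.gf_left_Fp f hx (M.lie u y)]
    constructor
    · intro h u hu x hx y hy; rw [heq u x y hx hy]; exact h u hu x hx y hy
    · intro h u hu x hx y hy; rw [← heq u x y hx hy]; exact h u hu x hx y hy
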